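/- Fix integers r ≥ 1 and 0 = n_0 ≤ n_1 ≤ … ≤ n_r = n, and a quiver (α, β) satisfying the complex moment map equations at level (λ_1,…,λ_{r−1}) ∈ ℂ^{r−1}. Let X = α_{r−1}β_{r−1} and ν_i = λ_i + λ_{i+1} + ⋯ + λ_{r−1}. Then X (X + ν_{r−1} I)(X + ν_{r−2} I) ⋯ (X + ν_1 I) = 0. In particular, if λ_i = 0 for all i, then X^r = 0, i.e., X is nilpotent. -/

import Mathlib

/-- (Here the paper's `r` is `m + 1`, so `r ≥ 1` always
holds; the quiver maps are `α i : ℂ^(dims i) → ℂ^(dims (i+1))` and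
`β i : ℂ^(dims (i+1)) → ℂ^(dims i)` for `i = 0, …, m`, with `dims 0 = 0`, and
the complex moment map equations at level `(λ_1, …, λ_m)` are as usual.
`X = α_m β_m` and `ν_i = λ_i + λ_{i+1} + ⋯ + λ_m`.)

Then `X (X + ν_m I)(X + ν_{m-1} I) ⋯ (X + ν_1 I) = 0`.  In particular if all
`λ_i = 0` then `X^(m+1) = 0`, i.e. `X` is nilpotent. -/
theorem statement5 (m : ℕ) (dims : ℕ → ℕ) (h0 : dims 0 = 0)
    (hmono : ∀ i ≤ m, dims i ≤ dims (i+1))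
    (α : ∀ i : ℕ, Matrix (Fin (dims (i+1))) (Fin (dims i)) ℂ)
    (β : ∀ i : ℕ, Matrix (Fin (dims i)) (Fin (dims (i+1))) ℂ)
    (lam : ℕ → ℂ)
    (hmm : ∀ j < m, α j * β j - β (j+1) * α (j+1) =
      lam (j+1) • (1 : Matrix (Fin (dims (j+1))) (Fin (dims (j+1))) ℂ)) :
    (α m * β m) *
        (List.ofFn (fun i : Fin m =>
          α m * β m + (∑ t ∈ Finset.Icc (m - (i : ℕ)) m, lam t) •
            (1 : Matrix (Fin (dims (m+1))) (Fin (dims (m+1))) ℂ))).prod = 0 ∧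
      ((∀ i, 1 ≤ i → i ≤ m → lam i = 0) → (α m * β m) ^ (m + 1) = 0) := by
  set X := α m * β m with hX
  have key : ∀ k, ∀ j, j + k = m →
      ∃ (P : Matrix (Fin (dims (m+1))) (Fin (dims j)) ℂ)
        (Q : Matrix (Fin (dims j)) (Fin (dims (m+1))) ℂ),
        X * (List.ofFn (fun i : Fin k =>
          X + (∑ t ∈ Finset.Icc (m - (i : ℕ)) m, lam t) •
            (1 : Matrix (Fin (dims (m+1))) (Fin (dims (m+1))) ℂ))).prod = P * Q ∧
        Q * X = (β j * α j) * Q - (∑ t ∈ Finset.Icc (j+1) m, lam t) • Q := by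
    intro k
    induction k with
    | zero =>
      intro j hj
      have hjm : j = m := by omega
      subst hjm
      refine ⟨α j, β j, by simp [hX], ?_⟩
      have he : Finset.Icc (j+1) j = (∅ : Finset ℕ) := Finset.Icc_eq_empty (by omega)
      simp [he, hX, Matrix.mul_assoc]
    | succ k ih =>
      intro j hj
      obtain ⟨P, Q, hPQ, hQX⟩ := ih (j+1) (by omega)
      have hjm : j < m := by omega
      have hmk : m - k = j + 1 := by omega
      have hmoment := hmm j hjm
      have hba : β (j+1) * α (j+1) = α j * β j - lam (j+1) •
          (1 : Matrix (Fin (dims (j+1))) (Fin (dims (j+1))) ℂ) := by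
        rw [← hmoment, sub_sub_cancel]
      have hsum : (∑ t ∈ Finset.Icc (j+1) m, lam t)
          = lam (j+1) + ∑ t ∈ Finset.Icc (j+2) m, lam t := by
        rw [show Finset.Icc (j+1) m = insert (j+1) (Finset.Icc (j+2) m) from by
          ext x; simp [Finset.mem_Icc, Finset.mem_insert]; omega]
        rw [Finset.sum_insert (by simp [Finset.mem_Icc])]
      set s := ∑ t ∈ Finset.Icc (j+2) m, lam t with hs
      -- expand the product over Fin (k+1)
      have hprod : (List.ofFn (fun i : Fin (k+1) =>
          X + (∑ t ∈ Finset.Icc (m - (i : ℕ)) m, lam t) •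
            (1 : Matrix (Fin (dims (m+1))) (Fin (dims (m+1))) ℂ))).prod
          = (List.ofFn (fun i : Fin k =>
          X + (∑ t ∈ Finset.Icc (m - (i : ℕ)) m, lam t) •
            (1 : Matrix (Fin (dims (m+1))) (Fin (dims (m+1))) ℂ))).prod *
            (X + (∑ t ∈ Finset.Icc (j+1) m, lam t) •
            (1 : Matrix (Fin (dims (m+1))) (Fin (dims (m+1))) ℂ)) := by
        rw [List.ofFn_succ', List.concat_eq_append, List.prod_append, List.prod_singleton]
        simp [Fin.coe_castSucc, Fin.val_last, hmk]
      refine ⟨P * α j, β j * Q, ?_, ?_⟩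
      · rw [hprod, ← Matrix.mul_assoc, hPQ, Matrix.mul_add, Matrix.mul_assoc P Q X,
          hQX, hba, hsum]
        simp only [Matrix.mul_add, Matrix.add_mul, Matrix.mul_sub, Matrix.sub_mul,
          Matrix.smul_mul, Matrix.mul_smul, Matrix.one_mul, Matrix.mul_one, add_smul,
          Matrix.mul_assoc]
        abel
      · rw [Matrix.mul_assoc, hQX, hba, hsum]
        simp only [Matrix.mul_add, Matrix.add_mul, Matrix.mul_sub, Matrix.sub_mul,
          Matrix.smul_mul, Matrix.mul_smul, Matrix.one_mul, Matrix.mul_one, add_smul,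
          Matrix.mul_assoc]
        abel
  obtain ⟨P, Q, hPQ, -⟩ := key m 0 (by omega)
  haveI : IsEmpty (Fin (dims 0)) := by rw [h0]; infer_instance
  have hzero : P * Q = 0 := by
    ext i j'
    simp [Matrix.mul_apply]
  have hmain : X * (List.ofFn (fun i : Fin m =>
      X + (∑ t ∈ Finset.Icc (m - (i : ℕ)) m, lam t) •
        (1 : Matrix (Fin (dims (m+1))) (Fin (dims (m+1))) ℂ))).prod = 0 := by
    rw [hPQ, hzero]
  refine ⟨hmain, ?_⟩
  intro hl
  have hfun : (fun i : Fin m =>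
      X + (∑ t ∈ Finset.Icc (m - (i : ℕ)) m, lam t) •
        (1 : Matrix (Fin (dims (m+1))) (Fin (dims (m+1))) ℂ)) = fun _ => X := by
    funext i
    have : (∑ t ∈ Finset.Icc (m - (i : ℕ)) m, lam t) = 0 := by
      refine Finset.sum_eq_zero fun t ht => ?_
      rw [Finset.mem_Icc] at ht
      exact hl t (by omega) ht.2
    simp [this]
  rw [hfun, List.ofFn_const, List.prod_replicate] at hmain
  rw [pow_succ']
  exact hmain
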